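/- For the 2-species TAZRP on ℤ_L in the sector with one particle of each species, the matrix product expressions evaluate as: Tr(X_{00}^{L-2} X_{10} X_{01}) computed with X_{σ¹,σ²} = Σ_{j≥0}(a⁺)^j k^{σ¹}(a⁻)^{σ²} gives Σ over j₁,...,j_L ≥ 0 of Tr((a⁺)^{j₁+⋯+j_{L-1}} k (a⁺)^{j_L} a⁻) = L - 1, and Tr(X_{00}^{L-2} X_{01} X_{10}) = 1. -/
import Mathlib


/-- The q=0 oscillator a⁺ on the Fock space F = ℕ →₀ ℂ : |m⟩ ↦ |m+1⟩. -/
noncomputable def aPlus : Module.End ℂ (ℕ →₀ ℂ) :=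
  Finsupp.lsum ℂ fun m => Finsupp.lsingle (m + 1)

/-- The q=0 oscillator a⁻ : |m⟩ ↦ |m-1⟩, with |-1⟩ = 0. -/
noncomputable def aMinus : Module.End ℂ (ℕ →₀ ℂ) :=
  Finsupp.lsum ℂ fun m => if m = 0 then 0 else Finsupp.lsingle (m - 1)

/-- The q=0 oscillator k : |m⟩ ↦ δ_{m,0}|m⟩. -/
noncomputable def kOsc : Module.End ℂ (ℕ →₀ ℂ) :=
  Finsupp.lsum ℂ fun m => if m = 0 then Finsupp.lsingle 0 else 0

/-- The trace Tr(X) = Σ_{m≥0} ⟨m|X|m⟩ on the Fock space. -/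
noncomputable def FockTr (X : Module.End ℂ (ℕ →₀ ℂ)) : ℂ :=
  ∑ᶠ m : ℕ, (X (Finsupp.single m 1)) m

lemma aPlus_single (m : ℕ) : aPlus (Finsupp.single m 1) = Finsupp.single (m+1) 1 := by
  simp [aPlus]

lemma aPlus_pow_single (n m : ℕ) : (aPlus ^ n) (Finsupp.single m 1) = Finsupp.single (m+n) 1 := by
  induction n with
  | zero => simp
  | succ n ih =>
    rw [pow_succ', Module.End.mul_apply, ih, aPlus_single, Nat.add_assoc]

lemma aMinus_single (m : ℕ) :
    aMinus (Finsupp.single m 1) = if m = 0 then 0 else Finsupp.single (m-1) 1 := by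
  simp only [aMinus, Finsupp.lsum_single]; split <;> simp

lemma kOsc_single (m : ℕ) :
    kOsc (Finsupp.single m 1) = if m = 0 then Finsupp.single 0 1 else 0 := by
  simp only [kOsc, Finsupp.lsum_single]; split <;> simp

lemma tr1 (n j : ℕ) :
    FockTr (aPlus ^ n * kOsc * aPlus ^ j * aMinus) = if n = 1 ∧ j = 0 then 1 else 0 := by
  have key : ∀ m : ℕ, ((aPlus ^ n * kOsc * aPlus ^ j * aMinus) (Finsupp.single m 1)) m
      = if m = 1 ∧ n = 1 ∧ j = 0 then 1 else 0 := by
    intro m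
    rw [Module.End.mul_apply, Module.End.mul_apply, Module.End.mul_apply, aMinus_single]
    rcases eq_or_ne m 0 with rfl | hm
    · simp
    · rw [if_neg hm, aPlus_pow_single, kOsc_single]
      rcases eq_or_ne (m - 1 + j) 0 with h | h
      · rw [if_pos h, aPlus_pow_single, zero_add, Finsupp.single_apply]
        have hm1 : m = 1 := by omega
        have hj : j = 0 := by omega
        subst hm1 hj
        by_cases hn : n = 1
        · subst hn; simp
        · rw [if_neg (by omega), if_neg (by tauto)]
      · rw [if_neg h]
        simp only [map_zero, Finsupp.coe_zero, Pi.zero_apply]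
        rw [if_neg (by omega)]
  unfold FockTr
  rw [finsum_congr key]
  by_cases h : n = 1 ∧ j = 0
  · rw [finsum_eq_single _ 1 (fun m hm => by simp [hm]), if_pos ⟨rfl, h⟩, if_pos h]
  · rw [if_neg h, finsum_eq_zero_of_forall_eq_zero]
    intro m
    exact if_neg fun hh => h ⟨hh.2.1, hh.2.2⟩

lemma tr2 (n j : ℕ) :
    FockTr (aPlus ^ n * aMinus * aPlus ^ j * kOsc) = if n = 0 ∧ j = 1 then 1 else 0 := by
  have key : ∀ m : ℕ, ((aPlus ^ n * aMinus * aPlus ^ j * kOsc) (Finsupp.single m 1)) m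
      = if m = 0 ∧ n = 0 ∧ j = 1 then 1 else 0 := by
    intro m
    rw [Module.End.mul_apply, Module.End.mul_apply, Module.End.mul_apply, kOsc_single]
    rcases eq_or_ne m 0 with rfl | hm
    · rw [if_pos rfl, aPlus_pow_single, zero_add, aMinus_single]
      rcases eq_or_ne j 0 with rfl | hj
      · simp
      · rw [if_neg hj, aPlus_pow_single, Finsupp.single_apply]
        by_cases hc : n = 0 ∧ j = 1
        · obtain ⟨rfl, rfl⟩ := hc; simp
        · rw [if_neg (by omega), if_neg (by tauto)]
    · rw [if_neg hm]
      simp only [map_zero, Finsupp.coe_zero, Pi.zero_apply]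
      rw [if_neg (by tauto)]
  unfold FockTr
  rw [finsum_congr key]
  by_cases h : n = 0 ∧ j = 1
  · rw [finsum_eq_single _ 0 (fun m hm => by simp [hm]), if_pos ⟨rfl, h⟩, if_pos h]
  · rw [if_neg h, finsum_eq_zero_of_forall_eq_zero]
    intro m
    exact if_neg fun hh => h ⟨hh.2.1, hh.2.2⟩

lemma sum_eq_one_nat {ι : Type*} [Fintype ι] [DecidableEq ι] (f : ι → ℕ)
    (h : ∑ r, f r = 1) : ∃ i, f = Pi.single i 1 := by
  have h1 : ∃ i, f i ≠ 0 := by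
    by_contra hc
    push_neg at hc
    simp [Finset.sum_eq_zero (fun i _ => hc i)] at h
  obtain ⟨i, hi⟩ := h1
  refine ⟨i, funext fun j => ?_⟩
  have hle : f i ≤ ∑ r, f r := Finset.single_le_sum (fun _ _ => Nat.zero_le _) (Finset.mem_univ i)
  have hfi : f i = 1 := by omega
  have hrest : ∑ r ∈ Finset.univ.erase i, f r = 0 := by
    have := Finset.add_sum_erase Finset.univ f (Finset.mem_univ i)
    omega
  rcases eq_or_ne j i with rfl | hj
  · simp [hfi]
  · have : f j = 0 := by
      have := Finset.sum_eq_zero_iff.mp hrest j (Finset.mem_erase.mpr ⟨hj, Finset.mem_univ j⟩)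
      exact this
    simp [Pi.single_eq_of_ne hj, this]

/-- For the 2-TAZRP on ℤ_L in the sector with one particle of
each species, the matrix product expressions evaluate as
Tr(X_{00}^{L-2} X_{10} X_{01})
  = Σ_{j₁,…,j_L ≥ 0} Tr((a⁺)^{j₁+⋯+j_{L-1}} k (a⁺)^{j_L} a⁻) = L - 1, and
Tr(X_{00}^{L-2} X_{01} X_{10})
  = Σ_{j₁,…,j_L ≥ 0} Tr((a⁺)^{j₁+⋯+j_{L-1}} a⁻ (a⁺)^{j_L} k) = 1.
(The first L-1 summation indices are grouped as p.1 : Fin (L-1) → ℕ and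
the last as p.2 : ℕ.) -/
theorem two_tazrp_trace_evaluation (L : ℕ) (hL : 2 ≤ L) :
    (∑ᶠ p : (Fin (L - 1) → ℕ) × ℕ,
        FockTr (aPlus ^ (∑ r, p.1 r) * kOsc * aPlus ^ p.2 * aMinus))
      = (L : ℂ) - 1 ∧
    (∑ᶠ p : (Fin (L - 1) → ℕ) × ℕ,
        FockTr (aPlus ^ (∑ r, p.1 r) * aMinus * aPlus ^ p.2 * kOsc))
      = 1 := by
  constructor
  · have hcong : ∀ p : (Fin (L - 1) → ℕ) × ℕ,
        FockTr (aPlus ^ (∑ r, p.1 r) * kOsc * aPlus ^ p.2 * aMinus)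
          = if (∑ r, p.1 r) = 1 ∧ p.2 = 0 then 1 else 0 := fun p => tr1 _ _
    rw [finsum_congr hcong]
    set s : Finset ((Fin (L - 1) → ℕ) × ℕ) :=
      Finset.univ.image (fun i : Fin (L - 1) => (Pi.single i 1, 0)) with hs
    rw [finsum_eq_finset_sum_of_support_subset _ (s := s) ?sub]
    case sub =>
      intro p hp
      simp only [Function.mem_support, ne_eq, ite_eq_right_iff, not_forall] at hp
      obtain ⟨⟨hsum, h2⟩, -⟩ := hp
      obtain ⟨i, hi⟩ := sum_eq_one_nat p.1 hsum
      simp only [hs, Finset.coe_image, Set.mem_image, Finset.mem_coe, Finset.mem_univ, true_and,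
        Finset.coe_univ, Set.image_univ, Set.mem_range]
      exact ⟨i, Prod.ext hi.symm h2.symm⟩
    rw [Finset.sum_image (by
      intro i _ i' _ hii
      by_contra hne
      have h1 := congrArg (fun q => q.1 i) hii
      have h2 : (Pi.single i 1 : Fin (L-1) → ℕ) i = (Pi.single i' 1 : Fin (L-1) → ℕ) i := by exact h1
      rw [Pi.single_eq_same, Pi.single_eq_of_ne hne] at h2
      exact one_ne_zero h2)]
    have : ∀ i : Fin (L - 1),
        (if (∑ r, (Pi.single i 1 : Fin (L-1) → ℕ) r) = 1 ∧ (0:ℕ) = 0 then (1:ℂ) else 0) = 1 := by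
      intro i
      rw [if_pos ⟨by simp [Finset.sum_pi_single'], rfl⟩]
    rw [Finset.sum_congr rfl (fun i _ => this i), Finset.sum_const, Finset.card_univ,
      Fintype.card_fin, nsmul_eq_mul, mul_one, Nat.cast_sub (by omega), Nat.cast_one]
  · have hcong : ∀ p : (Fin (L - 1) → ℕ) × ℕ,
        FockTr (aPlus ^ (∑ r, p.1 r) * aMinus * aPlus ^ p.2 * kOsc)
          = if (∑ r, p.1 r) = 0 ∧ p.2 = 1 then 1 else 0 := fun p => tr2 _ _
    rw [finsum_congr hcong, finsum_eq_single _ ((0 : Fin (L-1) → ℕ), 1)]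
    · rw [if_pos ⟨by simp, rfl⟩]
    · intro p hp
      rw [if_neg]
      rintro ⟨h1, h2⟩
      apply hp
      have : p.1 = 0 := funext fun j =>
        Finset.sum_eq_zero_iff.mp h1 j (Finset.mem_univ j)
      exact Prod.ext this h2
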